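/- arXiv:1403.5124 — 4 statements merged into one kernel-verified Lean document; each statement's English description precedes it below -/
import Mathlib

section
/- The nine elements a, a', b, c, c', d, d', e, f of F are algebraically independent over ℚ; consequently the subring ℤ[a, a', b, c, c', d, d', e, f] of F is isomorphic to a polynomial ring over ℤ in nine indeterminates. -/
set_option maxHeartbeats 4000000
set_option synthInstance.maxHeartbeats 1000000


noncomputable section

/-- The field `F = Frac(ℤ[x₀,…,x₈])`. -/
abbrev F : Type := FractionRing (MvPolynomial (Fin 9) ℤ)

/-- The images of the indeterminates `x₀,…,x₈` in `F`. -/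
def x (i : Fin 9) : F := algebraMap (MvPolynomial (Fin 9) ℤ) F (MvPolynomial.X i)

def a : F := x 0
def a' : F := x 4
def b : F := x 5
def c : F := (x 1 + x 0 * x 2 + x 7) / (x 0 * x 1)
def c' : F := (x 3 + x 2 * x 4 + x 8) / (x 3 * x 4)
def f : F := (x 2 + x 1 * x 3 * x 5 + x 6) / (x 2 * x 5)
def d : F :=
  ((x 1) ^ 2 * x 3 * x 5 + (x 2 + x 6) * (x 0 * x 2 + x 7)
      + x 1 * (x 2 + x 6 + x 3 * x 5 * x 7)) / (x 0 * x 1 * x 2 * x 5)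
def d' : F :=
  ((x 2) ^ 2 * x 4 + (x 1 * x 3 * x 5 + x 6) * (x 3 + x 8)
      + x 2 * (x 3 + x 4 * x 6 + x 8)) / (x 2 * x 3 * x 4 * x 5)
def e : F :=
  ((x 1) ^ 2 * x 3 * x 5 * (x 3 + x 8)
      + (x 2 + x 6) * (x 0 * x 2 + x 7) * (x 3 + x 2 * x 4 + x 8)
      + x 1 * ((x 2) ^ 2 * x 4 + (x 6 + x 3 * x 5 * x 7) * (x 3 + x 8)
          + x 2 * (x 3 + x 4 * x 6 + x 8))) / (x 0 * x 1 * x 2 * x 3 * x 4 * x 5)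

/-! ### Auxiliary material for the proof -/

open MvPolynomial Function

/-- The base polynomial ring. -/
abbrev A9 : Type := MvPolynomial (Fin 9) ℤ

/-- The family of the nine cluster variables, in the order of the statement. -/
def vfam : Fin 9 → F := ![a, a', b, c, c', d, d', e, f]

lemma hinjZ : Function.Injective (algebraMap A9 F) :=
  IsFractionRing.injective _ _

lemma x_ne_zero (i : Fin 9) : x i ≠ 0 := by
  simp [x, map_eq_zero_iff _ hinjZ, MvPolynomial.X_ne_zero (R := ℤ) i]

/-- The inverse polynomial map: `U i` expresses `x i` as a polynomial in the
slots `(a, a', b, c, c', d, d', e, f)`. -/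
def U : Fin 9 → A9 :=
  ![X 0,
    X 4 * X 8 - X 6,
    X 7 + X 3 * X 4 * X 8 - X 3 * X 6 - X 4 * X 5,
    X 3 * X 8 - X 5,
    X 1,
    X 2,
    X 8 * X 2 * (X 7 + X 3 * X 4 * X 8 - X 3 * X 6 - X 4 * X 5)
      - (X 7 + X 3 * X 4 * X 8 - X 3 * X 6 - X 4 * X 5)
      - (X 4 * X 8 - X 6) * (X 3 * X 8 - X 5) * X 2,
    X 3 * X 0 * (X 4 * X 8 - X 6) - (X 4 * X 8 - X 6)
      - X 0 * (X 7 + X 3 * X 4 * X 8 - X 3 * X 6 - X 4 * X 5),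
    X 4 * X 1 * (X 3 * X 8 - X 5) - (X 3 * X 8 - X 5)
      - X 1 * (X 7 + X 3 * X 4 * X 8 - X 3 * X 6 - X 4 * X 5)]

/-- The images `u i = algebraMap (U i)` of the inverse map in `F`. -/
def u (i : Fin 9) : F := algebraMap A9 F (U i)

lemma hU0eq : U 0 = X 0 := rfl
lemma hu0 : u 0 = x 0 := by
  simp only [u, hU0eq, map_sub, map_add, map_mul, x]

lemma hU1eq : U 1 = X 4 * X 8 - X 6 := rfl
lemma hu1 : u 1 = x 4 * x 8 - x 6 := by
  simp only [u, hU1eq, map_sub, map_add, map_mul, x]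

lemma hU2eq : U 2 = X 7 + X 3 * X 4 * X 8 - X 3 * X 6 - X 4 * X 5 := rfl
lemma hu2 : u 2 = x 7 + x 3 * x 4 * x 8 - x 3 * x 6 - x 4 * x 5 := by
  simp only [u, hU2eq, map_sub, map_add, map_mul, x]

lemma hU3eq : U 3 = X 3 * X 8 - X 5 := rfl
lemma hu3 : u 3 = x 3 * x 8 - x 5 := by
  simp only [u, hU3eq, map_sub, map_add, map_mul, x]

lemma hU4eq : U 4 = X 1 := rfl
lemma hu4 : u 4 = x 1 := by
  simp only [u, hU4eq, map_sub, map_add, map_mul, x]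

lemma hU5eq : U 5 = X 2 := rfl
lemma hu5 : u 5 = x 2 := by
  simp only [u, hU5eq, map_sub, map_add, map_mul, x]

lemma hU6eq : U 6 = X 8 * X 2 * (X 7 + X 3 * X 4 * X 8 - X 3 * X 6 - X 4 * X 5) - (X 7 + X 3 * X 4 * X 8 - X 3 * X 6 - X 4 * X 5) - (X 4 * X 8 - X 6) * (X 3 * X 8 - X 5) * X 2 := rfl
lemma hu6 : u 6 = x 8 * x 2 * (x 7 + x 3 * x 4 * x 8 - x 3 * x 6 - x 4 * x 5)
    - (x 7 + x 3 * x 4 * x 8 - x 3 * x 6 - x 4 * x 5)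
    - (x 4 * x 8 - x 6) * (x 3 * x 8 - x 5) * x 2 := by
  simp only [u, hU6eq, map_sub, map_add, map_mul, x]

lemma hU7eq : U 7 = X 3 * X 0 * (X 4 * X 8 - X 6) - (X 4 * X 8 - X 6) - X 0 * (X 7 + X 3 * X 4 * X 8 - X 3 * X 6 - X 4 * X 5) := rfl
lemma hu7 : u 7 = x 3 * x 0 * (x 4 * x 8 - x 6) - (x 4 * x 8 - x 6)
    - x 0 * (x 7 + x 3 * x 4 * x 8 - x 3 * x 6 - x 4 * x 5) := by
  simp only [u, hU7eq, map_sub, map_add, map_mul, x]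

lemma hU8eq : U 8 = X 4 * X 1 * (X 3 * X 8 - X 5) - (X 3 * X 8 - X 5) - X 1 * (X 7 + X 3 * X 4 * X 8 - X 3 * X 6 - X 4 * X 5) := rfl
lemma hu8 : u 8 = x 4 * x 1 * (x 3 * x 8 - x 5) - (x 3 * x 8 - x 5)
    - x 1 * (x 7 + x 3 * x 4 * x 8 - x 3 * x 6 - x 4 * x 5) := by
  simp only [u, hU8eq, map_sub, map_add, map_mul, x]

lemma hU1ne : U 1 ≠ 0 := by
  intro h
  have := congrArg (MvPolynomial.aeval (fun j : Fin 9 => if j = 6 then (1:ℤ) else 0)) h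
  rw [hU1eq] at h
  simp [hU1eq] at this

lemma hU2ne : U 2 ≠ 0 := by
  intro h
  have := congrArg (MvPolynomial.aeval (fun j : Fin 9 => if j = 7 then (1:ℤ) else 0)) h
  rw [hU2eq] at h
  simp [hU2eq] at this

lemma hU3ne : U 3 ≠ 0 := by
  intro h
  have := congrArg (MvPolynomial.aeval (fun j : Fin 9 => if j = 5 then (1:ℤ) else 0)) h
  rw [hU3eq] at h
  simp [hU3eq] at this

lemma hu_ne : ∀ i : Fin 9, i < 6 → u i ≠ 0 := by
  have hne : ∀ i : Fin 9, U i ≠ 0 → u i ≠ 0 := fun i h => by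
    simpa [u, map_eq_zero_iff _ hinjZ] using h
  intro i hi
  fin_cases i
  · exact hne 0 (hU0eq ▸ MvPolynomial.X_ne_zero _)
  · exact hne 1 hU1ne
  · exact hne 2 hU2ne
  · exact hne 3 hU3ne
  · exact hne 4 (hU4eq ▸ MvPolynomial.X_ne_zero _)
  · exact hne 5 (hU5eq ▸ MvPolynomial.X_ne_zero _)
  all_goals exact absurd hi (by decide)

/-! The first set of identities: `U i` evaluated at the family `vfam` gives back `x i`. -/

lemma idA1 : c' * f - d' = x 1 := by
  have h2 := x_ne_zero 2; have h3 := x_ne_zero 3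
  have h4 := x_ne_zero 4; have h5 := x_ne_zero 5
  rw [c', f, d']
  simp only [div_mul_div_comm]
  rw [div_sub_div _ _ (by simp [h2, h3, h4, h5]) (by simp [h2, h3, h4, h5]),
    div_eq_iff (by simp [h2, h3, h4, h5])]
  ring

lemma idA3 : c * f - d = x 3 := by
  have h0 := x_ne_zero 0; have h1 := x_ne_zero 1
  have h2 := x_ne_zero 2; have h5 := x_ne_zero 5
  rw [c, f, d]
  simp only [div_mul_div_comm]
  rw [div_sub_div _ _ (by simp [h0, h1, h2, h5]) (by simp [h0, h1, h2, h5]),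
    div_eq_iff (by simp [h0, h1, h2, h5])]
  ring

lemma idA2 : e + c * c' * f - c * d' - c' * d = x 2 := by
  have h0 := x_ne_zero 0; have h1 := x_ne_zero 1
  have h2 := x_ne_zero 2; have h3 := x_ne_zero 3
  have h4 := x_ne_zero 4; have h5 := x_ne_zero 5
  rw [c, c', d, d', e, f]
  simp only [div_mul_div_comm]
  rw [div_add_div _ _ (by simp [h0, h1, h2, h3, h4, h5]) (by simp [h0, h1, h2, h3, h4, h5]),
    div_sub_div _ _ (by simp [h0, h1, h2, h3, h4, h5]) (by simp [h0, h1, h2, h3, h4, h5]),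
    div_sub_div _ _ (by simp [h0, h1, h2, h3, h4, h5]) (by simp [h0, h1, h2, h3, h4, h5]),
    div_eq_iff (by simp [h0, h1, h2, h3, h4, h5])]
  ring

lemma idA7 : c * a * (c' * f - d') - (c' * f - d')
    - a * (e + c * c' * f - c * d' - c' * d) = x 7 := by
  rw [idA1, idA2, c, a]
  have h0 := x_ne_zero 0; have h1 := x_ne_zero 1
  simp only [div_mul_eq_mul_div]
  rw [sub_sub, sub_eq_iff_eq_add, div_eq_iff (by simp [h0, h1])]
  ring

lemma idA8 : c' * a' * (c * f - d) - (c * f - d)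
    - a' * (e + c * c' * f - c * d' - c' * d) = x 8 := by
  rw [idA3, idA2, c', a']
  have h3 := x_ne_zero 3; have h4 := x_ne_zero 4
  simp only [div_mul_eq_mul_div]
  rw [sub_sub, sub_eq_iff_eq_add, div_eq_iff (by simp [h3, h4])]
  ring

lemma idA6 : f * b * (e + c * c' * f - c * d' - c' * d)
    - (e + c * c' * f - c * d' - c' * d)
    - (c' * f - d') * (c * f - d) * b = x 6 := by
  rw [idA1, idA3, idA2, f, b]
  have h2 := x_ne_zero 2; have h5 := x_ne_zero 5
  simp only [div_mul_eq_mul_div]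
  rw [sub_sub, sub_eq_iff_eq_add, div_eq_iff (by simp [h2, h5])]
  ring

/-- Evaluating `U i` at the family `vfam` gives `x i`. -/
lemma hAeval (i : Fin 9) : MvPolynomial.aeval vfam (U i) = x i := by
  have hv0 : vfam 0 = a := rfl
  have hv1 : vfam 1 = a' := rfl
  have hv2 : vfam 2 = b := rfl
  have hv3 : vfam 3 = c := rfl
  have hv4 : vfam 4 = c' := rfl
  have hv5 : vfam 5 = d := rfl
  have hv6 : vfam 6 = d' := rfl
  have hv7 : vfam 7 = e := rfl
  have hv8 : vfam 8 = f := rfl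
  fin_cases i
  · show MvPolynomial.aeval vfam (U 0) = x 0
    rw [show U 0 = X 0 from rfl, aeval_X, hv0, a]
  · show MvPolynomial.aeval vfam (U 1) = x 1
    rw [hU1eq]
    simp only [map_sub, map_add, map_mul, aeval_X, hv3, hv4, hv5, hv6, hv7, hv8]
    exact idA1
  · show MvPolynomial.aeval vfam (U 2) = x 2
    rw [hU2eq]
    simp only [map_sub, map_add, map_mul, aeval_X, hv3, hv4, hv5, hv6, hv7, hv8]
    exact idA2
  · show MvPolynomial.aeval vfam (U 3) = x 3
    rw [hU3eq]
    simp only [map_sub, map_add, map_mul, aeval_X, hv3, hv4, hv5, hv6, hv7, hv8]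
    exact idA3
  · show MvPolynomial.aeval vfam (U 4) = x 4
    rw [show U 4 = X 1 from rfl, aeval_X, hv1, a']
  · show MvPolynomial.aeval vfam (U 5) = x 5
    rw [show U 5 = X 2 from rfl, aeval_X, hv2, b]
  · show MvPolynomial.aeval vfam (U 6) = x 6
    rw [hU6eq]
    simp only [map_sub, map_add, map_mul, aeval_X, hv0, hv1, hv2, hv3, hv4, hv5, hv6, hv7, hv8]
    exact idA6
  · show MvPolynomial.aeval vfam (U 7) = x 7
    rw [hU7eq]
    simp only [map_sub, map_add, map_mul, aeval_X, hv0, hv1, hv2, hv3, hv4, hv5, hv6, hv7, hv8]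
    exact idA7
  · show MvPolynomial.aeval vfam (U 8) = x 8
    rw [hU8eq]
    simp only [map_sub, map_add, map_mul, aeval_X, hv0, hv1, hv2, hv3, hv4, hv5, hv6, hv7, hv8]
    exact idA8

/-- The ring homomorphism `g : A9 → F`, `X i ↦ u i`. -/
def gmap : A9 →+* F :=
  (algebraMap A9 F).comp (MvPolynomial.aeval (R := ℤ) U).toRingHom

lemma gmap_X (i : Fin 9) : gmap (X i) = u i := by
  simp [gmap, u]

lemma gmap_injective : Function.Injective gmap := by
  have hcomp : (MvPolynomial.aeval (R := ℤ) vfam).toRingHom.comp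
      (MvPolynomial.aeval (R := ℤ) U).toRingHom = algebraMap A9 F := by
    apply MvPolynomial.ringHom_ext'
    · exact RingHom.ext_int _ _
    · intro i
      simp only [RingHom.coe_comp, Function.comp_apply, AlgHom.toRingHom_eq_coe,
        RingHom.coe_coe, aeval_X]
      exact hAeval i
  have hUinj : Function.Injective ⇑(MvPolynomial.aeval (R := ℤ) U) := by
    have h : Function.Injective (⇑(MvPolynomial.aeval (R := ℤ) vfam).toRingHom ∘
        ⇑(MvPolynomial.aeval (R := ℤ) U).toRingHom) := by
      rw [← RingHom.coe_comp, hcomp]; exact hinjZ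
    exact h.of_comp
  exact hinjZ.comp hUinj

/-- The field endomorphism `β : F → F` induced by `g`. -/
def beta : F →+* F := IsFractionRing.lift gmap_injective

lemma beta_x (i : Fin 9) : beta (x i) = u i := by
  rw [x, beta, IsFractionRing.lift_algebraMap]
  exact gmap_X i

/-! The second set of identities: `β (vfam j) = x j`. -/

lemma idB3 : (u 1 + u 0 * u 2 + u 7) / (u 0 * u 1) = x 3 := by
  have h0 := hu_ne 0 (by decide); have h1 := hu_ne 1 (by decide)
  rw [div_eq_iff (mul_ne_zero h0 h1), hu0, hu1, hu2, hu7]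
  ring

lemma idB4 : (u 3 + u 2 * u 4 + u 8) / (u 3 * u 4) = x 4 := by
  have h3 := hu_ne 3 (by decide); have h4 := hu_ne 4 (by decide)
  rw [div_eq_iff (mul_ne_zero h3 h4), hu2, hu3, hu4, hu8]
  ring

lemma idB8 : (u 2 + u 1 * u 3 * u 5 + u 6) / (u 2 * u 5) = x 8 := by
  have h2 := hu_ne 2 (by decide); have h5 := hu_ne 5 (by decide)
  rw [div_eq_iff (mul_ne_zero h2 h5), hu1, hu2, hu3, hu5, hu6]
  ring

lemma idB5 : ((u 1) ^ 2 * u 3 * u 5 + (u 2 + u 6) * (u 0 * u 2 + u 7)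
    + u 1 * (u 2 + u 6 + u 3 * u 5 * u 7)) / (u 0 * u 1 * u 2 * u 5) = x 5 := by
  have h0 := hu_ne 0 (by decide); have h1 := hu_ne 1 (by decide)
  have h2 := hu_ne 2 (by decide); have h5 := hu_ne 5 (by decide)
  rw [div_eq_iff (mul_ne_zero (mul_ne_zero (mul_ne_zero h0 h1) h2) h5), hu0, hu1, hu2, hu3,
    hu5, hu6, hu7]
  ring

lemma idB6 : ((u 2) ^ 2 * u 4 + (u 1 * u 3 * u 5 + u 6) * (u 3 + u 8)
    + u 2 * (u 3 + u 4 * u 6 + u 8)) / (u 2 * u 3 * u 4 * u 5) = x 6 := by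
  have h2 := hu_ne 2 (by decide); have h3 := hu_ne 3 (by decide)
  have h4 := hu_ne 4 (by decide); have h5 := hu_ne 5 (by decide)
  rw [div_eq_iff (mul_ne_zero (mul_ne_zero (mul_ne_zero h2 h3) h4) h5), hu1, hu2, hu3, hu4,
    hu5, hu6, hu8]
  ring

lemma idB7 : ((u 1) ^ 2 * u 3 * u 5 * (u 3 + u 8)
    + (u 2 + u 6) * (u 0 * u 2 + u 7) * (u 3 + u 2 * u 4 + u 8)
    + u 1 * ((u 2) ^ 2 * u 4 + (u 6 + u 3 * u 5 * u 7) * (u 3 + u 8)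
        + u 2 * (u 3 + u 4 * u 6 + u 8))) / (u 0 * u 1 * u 2 * u 3 * u 4 * u 5) = x 7 := by
  have h0 := hu_ne 0 (by decide); have h1 := hu_ne 1 (by decide)
  have h2 := hu_ne 2 (by decide); have h3 := hu_ne 3 (by decide)
  have h4 := hu_ne 4 (by decide); have h5 := hu_ne 5 (by decide)
  rw [div_eq_iff (mul_ne_zero (mul_ne_zero (mul_ne_zero (mul_ne_zero (mul_ne_zero h0 h1) h2)
    h3) h4) h5), hu0, hu1, hu2, hu3, hu4, hu5, hu6, hu7, hu8]
  ring

lemma beta_v (j : Fin 9) : beta (vfam j) = x j := by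
  fin_cases j
  · show beta a = x 0
    rw [a, beta_x, hu0]
  · show beta a' = x 1
    rw [a', beta_x, hu4]
  · show beta b = x 2
    rw [b, beta_x, hu5]
  · show beta c = x 3
    rw [c, map_div₀]
    simp only [map_add, map_mul, beta_x]
    exact idB3
  · show beta c' = x 4
    rw [c', map_div₀]
    simp only [map_add, map_mul, beta_x]
    exact idB4
  · show beta d = x 5
    rw [d]
    rw [map_div₀]
    simp only [map_add, map_mul, map_pow, beta_x]
    exact idB5
  · show beta d' = x 6
    rw [d']
    rw [map_div₀]
    simp only [map_add, map_mul, map_pow, beta_x]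
    exact idB6
  · show beta e = x 7
    rw [e]
    rw [map_div₀]
    simp only [map_add, map_mul, map_pow, beta_x]
    exact idB7
  · show beta f = x 8
    rw [f, map_div₀]
    simp only [map_add, map_mul, beta_x]
    exact idB8

/-! Algebraic independence of the `x i` over `ℚ`. -/

attribute [local instance] MvPolynomial.algebraMvPolynomial

instance : @IsScalarTower ℤ ℚ F Algebra.toSMul Algebra.toSMul Algebra.toSMul :=
  IsScalarTower.of_algebraMap_eq' (RingHom.ext_int _ _)

lemma hZx : (MvPolynomial.aeval (R := ℤ) x).toRingHom = algebraMap A9 F := by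
  apply MvPolynomial.ringHom_ext'
  · exact RingHom.ext_int _ _
  · intro i
    simp [x]

lemma hQx_inj :
    Function.Injective ⇑(MvPolynomial.aeval (R := ℚ) x :
      MvPolynomial (Fin 9) ℚ →ₐ[ℚ] F).toRingHom := by
  rw [IsLocalization.injective_iff_map_algebraMap_eq
    ((nonZeroDivisors ℤ).map (C : ℤ →+* A9))
    (MvPolynomial.aeval (R := ℚ) x).toRingHom]
  intro p q
  have key : ∀ r : A9, (MvPolynomial.aeval (R := ℚ) x).toRingHom
      (algebraMap A9 (MvPolynomial (Fin 9) ℚ) r) = algebraMap A9 F r := by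
    intro r
    rw [MvPolynomial.algebraMap_def]
    show MvPolynomial.aeval (R := ℚ) x (MvPolynomial.map (algebraMap ℤ ℚ) r) = _
    rw [MvPolynomial.aeval_map_algebraMap]
    exact congrFun (congrArg DFunLike.coe hZx) r
  rw [key, key]
  constructor
  · intro h
    exact congrArg _ ((MvPolynomial.map_injective _ (algebraMap ℤ ℚ).injective_int)
      ((MvPolynomial.algebraMap_def (σ := Fin 9) (R := ℤ) (S := ℚ)) ▸ h))
  · intro h
    exact congrArg _ (hinjZ h)

lemma hQv_indep : AlgebraicIndependent ℚ vfam := by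
  rw [algebraicIndependent_iff_injective_aeval]
  have hcompQ : beta.comp (MvPolynomial.aeval (R := ℚ) vfam).toRingHom =
      (MvPolynomial.aeval (R := ℚ) x).toRingHom := by
    apply MvPolynomial.ringHom_ext'
    · exact Subsingleton.elim _ _
    · intro i
      simp only [RingHom.coe_comp, Function.comp_apply, AlgHom.toRingHom_eq_coe,
        RingHom.coe_coe, aeval_X]
      exact beta_v i
  have h : Function.Injective (⇑beta ∘ ⇑(MvPolynomial.aeval (R := ℚ) vfam)) := by
    have : ⇑beta ∘ ⇑(MvPolynomial.aeval (R := ℚ) vfam) =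
        ⇑(beta.comp (MvPolynomial.aeval (R := ℚ) vfam).toRingHom) := rfl
    rw [this, hcompQ]
    exact hQx_inj
  exact h.of_comp

/-- The nine generators are algebraically independent over ℚ, and consequently
`ℤ[a, a', b, c, c', d, d', e, f]` is isomorphic to a polynomial ring over ℤ in nine
indeterminates. -/
theorem stmt0 :
    AlgebraicIndependent ℚ (![a, a', b, c, c', d, d', e, f] : Fin 9 → F) ∧
    Nonempty
      ((Algebra.adjoin ℤ (Set.range (![a, a', b, c, c', d, d', e, f] : Fin 9 → F))) ≃+*
        MvPolynomial (Fin 9) ℤ) := by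
  have h1 : AlgebraicIndependent ℚ vfam := hQv_indep
  have h2 : AlgebraicIndependent ℤ vfam :=
    h1.restrictScalars (algebraMap ℤ ℚ).injective_int
  exact ⟨h1, ⟨h2.aevalEquiv.symm.toRingEquiv⟩⟩
end
end

section
/- In F the identity b·e − c·c' = (x₁²·x₃·x₅·(x₃+x₈) + x₆·(x₀·x₂+x₇)·(x₃+x₂·x₄+x₈) + x₁·(x₃²·x₅·x₇ + x₆·(x₂·x₄+x₈) + x₃·(x₆+x₅·x₇·x₈)))/(x₀·x₁·x₂·x₃·x₄) holds; that is, the cluster variable x[α₀+α₁+α₂+α₃+α₄] equals the stated polynomial in the nine generators a, a', b, c, c', d, d', e, f. -/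
noncomputable section

set_option synthInstance.maxHeartbeats 1000000 in
set_option maxHeartbeats 2000000 in
theorem stmt13 :
    b * e - c * c'
      = ((x 1) ^ 2 * x 3 * x 5 * (x 3 + x 8)
          + x 6 * (x 0 * x 2 + x 7) * (x 3 + x 2 * x 4 + x 8)
          + x 1 * ((x 3) ^ 2 * x 5 * x 7 + x 6 * (x 2 * x 4 + x 8)
              + x 3 * (x 6 + x 5 * x 7 * x 8)))
        / (x 0 * x 1 * x 2 * x 3 * x 4) := by
  have hx : ∀ i : Fin 9, x i ≠ 0 := fun i => by
    simp only [x]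
    exact (map_ne_zero_iff _ (IsFractionRing.injective (MvPolynomial (Fin 9) ℤ) F)).mpr
      (MvPolynomial.X_ne_zero i)
  have h0 := hx 0
  have h1 := hx 1
  have h2 := hx 2
  have h3 := hx 3
  have h4 := hx 4
  have h5 := hx 5
  unfold b e c c'
  rw [mul_div_assoc', div_mul_div_comm, div_sub_div _ _ (by simp_all) (by simp_all),
    div_eq_div_iff (by simp_all) (by simp_all)]
  ring
end
end

section
/- In F the identity c − b·d + a'·(b·e − c·c') = (x₁²·x₃·x₅·x₈ + x₆·(x₀·x₂+x₇)·(x₂·x₄+x₈) + x₁·(x₂·x₄·x₆ + (x₆+x₃·x₅·x₇)·x₈))/(x₀·x₁·x₂·x₃) holds; that is, the cluster variable x[α₀+α₁+α₂+α₃] equals the stated polynomial in the nine generators a, a', b, c, c', d, d', e, f. -/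
noncomputable section

set_option synthInstance.maxHeartbeats 800000 in
set_option maxHeartbeats 2000000 in
theorem stmt15 :
    c - b * d + a' * (b * e - c * c')
      = ((x 1) ^ 2 * x 3 * x 5 * x 8
          + x 6 * (x 0 * x 2 + x 7) * (x 2 * x 4 + x 8)
          + x 1 * (x 2 * x 4 * x 6 + (x 6 + x 3 * x 5 * x 7) * x 8))
        / (x 0 * x 1 * x 2 * x 3) := by
  have hx : ∀ i : Fin 9, x i ≠ 0 := by
    intro i
    simp only [x]
    exact fun h => MvPolynomial.X_ne_zero i
      ((IsFractionRing.injective (MvPolynomial (Fin 9) ℤ) F).eq_iff.mp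
        (by simpa using h))
  have h01 : x 0 * x 1 ≠ 0 := mul_ne_zero (hx 0) (hx 1)
  have h34 : x 3 * x 4 ≠ 0 := mul_ne_zero (hx 3) (hx 4)
  have h0125 : x 0 * x 1 * x 2 * x 5 ≠ 0 :=
    mul_ne_zero (mul_ne_zero (mul_ne_zero (hx 0) (hx 1)) (hx 2)) (hx 5)
  have hd : x 0 * x 1 * x 2 * x 3 ≠ 0 :=
    mul_ne_zero (mul_ne_zero (mul_ne_zero (hx 0) (hx 1)) (hx 2)) (hx 3)
  have hall : x 0 * x 1 * x 2 * x 3 * x 4 * x 5 ≠ 0 :=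
    mul_ne_zero (mul_ne_zero hd (hx 4)) (hx 5)
  unfold a' b c c' d e
  rw [div_mul_div_comm]
  simp only [← mul_div_assoc]
  rw [div_sub_div _ _ hall (mul_ne_zero h01 h34)]
  simp only [← mul_div_assoc]
  rw [div_sub_div _ _ h01 h0125,
      div_add_div _ _ (mul_ne_zero h01 h0125) (mul_ne_zero hall (mul_ne_zero h01 h34)),
      div_eq_div_iff (mul_ne_zero (mul_ne_zero h01 h0125) (mul_ne_zero hall (mul_ne_zero h01 h34))) hd]
  ring
end
end

section
/- Let α ∈ Φ₊ be a positive root of type E₆, with coordinates α = Σᵢ aᵢαᵢ, such that α is not a simple root and α ∉ {α₀+α₁, α₃+α₄, α₂+α₅}. Put u = α₀+α₁+α₂+α₃+α₄+α₅ = (1,1,1,1,1,1), v = α₀+α₁+α₂+α₅ = (1,1,1,0,0,1), w = α₂+α₃+α₄+α₅ = (0,0,1,1,1,1). Then at least one of the following holds, and in each applicable case the stated expression is valid with the indicated coefficients all nonnegative integers: (i) a₁ = a₂ ≥ a₃, and α = a₃·u + (a₁−a₃)·v + (a₁−a₀)·(−α₀) + (a₃−a₄)·(−α₄) + (a₁−a₅)·(−α₅)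 with a₀ ≤ a₁, a₄ ≤ a₃ and a₅ ≤ a₁; (ii) a₁ ≤ a₂ = a₃, and α = a₁·u + (a₃−a₁)·w + (a₁−a₀)·(−α₀) + (a₃−a₄)·(−α₄) + (a₃−a₅)·(−α₅) with a₀ ≤ a₁, a₄ ≤ a₃ and a₅ ≤ a₃; (iii) a₁ = a₃ < a₂, and then ⌊a₂/2⌋ = a₂ − a₁, a₁ ≥ ⌊a₂/2⌋, and α = ⌊a₂/2⌋·v + ⌊a₂/2⌋·w + (a₁−⌊a₂/2⌋)·u + b₀·(−α₀) + b₄·(−α₄) + b₅·(−α₅) for some nonnegative integers b₀, b₄, b₅. -/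
open Finset

/-- The Cartan matrix of type E₆ with vertices labelled `0,1,2,3,4,5` and edges
`{0,1}, {1,2}, {2,3}, {3,4}, {2,5}` (vertex 5 attached to the trivalent node 2). -/
def cartanE6 (i j : Fin 6) : ℤ :=
  if i = j then 2
  else if (i.val, j.val) ∈
      [(0,1),(1,0),(1,2),(2,1),(2,3),(3,2),(3,4),(4,3),(2,5),(5,2)] then -1
  else 0

/-- The bilinear form `B(u,v) = uᵀ A v` on the root lattice `ℤ⁶`. -/
def bformE6 (u v : Fin 6 → ℤ) : ℤ := ∑ i, ∑ j, u i * cartanE6 i j * v j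

/-- The simple root `αᵢ`, the `i`-th standard basis vector of `ℤ⁶`. -/
def simpleRoot (i : Fin 6) : Fin 6 → ℤ := fun j => if j = i then 1 else 0

/-- A root of type E₆: a lattice vector of squared length 2. -/
def IsRoot (v : Fin 6 → ℤ) : Prop := bformE6 v v = 2

/-- A positive root: a root with all coordinates nonnegative. -/
def IsPositiveRoot (v : Fin 6 → ℤ) : Prop := IsRoot v ∧ ∀ i, 0 ≤ v i

/-- An almost positive root: a positive root or the negative of a simple root. -/
def IsAlmostPositive (v : Fin 6 → ℤ) : Prop :=
  IsPositiveRoot v ∨ ∃ i, v = -simpleRoot i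

/-- The sign `ε(i)`: `+1` on `Ĩ₀ = {1,3,5}` and `−1` on `{0,2,4}`. -/
def epsE6 (i : Fin 6) : ℤ := if i = 1 ∨ i = 3 ∨ i = 5 then 1 else -1

/-- The piecewise-linear involution `τ_ε` (`s = 1` gives `τ₊`, `s = -1` gives `τ₋`). -/
def tauE6 (s : ℤ) (v : Fin 6 → ℤ) : Fin 6 → ℤ := fun i =>
  if epsE6 i = s then -v i - ∑ j ∈ Finset.univ.erase i, cartanE6 i j * max (v j) 0
  else v i

/-- The pairing `{ξ, γ} = Σᵢ ε(i)·ξᵢ·γᵢ`. -/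
def pairE6 (ξ γ : Fin 6 → ℤ) : ℤ := ∑ i, epsE6 i * ξ i * γ i

/-- The compatibility degree `(α ∥ β) = max({α, τ₊β}, {τ₊α, β}, 0)`. -/
def compatDeg (α β : Fin 6 → ℤ) : ℤ :=
  max (max (pairE6 α (tauE6 1 β)) (pairE6 (tauE6 1 α) β)) 0

/-- `C<sub>α</sub>`: the set of almost positive roots compatible with `α`. -/
def compatSet (α : Fin 6 → ℤ) : Set (Fin 6 → ℤ) :=
  {β | IsAlmostPositive β ∧ compatDeg α β = 0}

/-- The highest root-lattice vectors used in the decomposition. -/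
def uE6 : Fin 6 → ℤ :=
  simpleRoot 0 + simpleRoot 1 + simpleRoot 2 + simpleRoot 3 + simpleRoot 4 + simpleRoot 5

def vE6 : Fin 6 → ℤ := simpleRoot 0 + simpleRoot 1 + simpleRoot 2 + simpleRoot 5

def wE6 : Fin 6 → ℤ := simpleRoot 2 + simpleRoot 3 + simpleRoot 4 + simpleRoot 5


def rootTuplesE6 : List (ℕ × ℕ × ℕ × ℕ × ℕ × ℕ) := [(0,0,0,0,0,1), (0,0,0,0,1,0), (0,0,0,1,0,0), (0,0,0,1,1,0), (0,0,1,0,0,0), (0,0,1,0,0,1), (0,0,1,1,0,0), (0,0,1,1,0,1), (0,0,1,1,1,0), (0,0,1,1,1,1), (0,1,0,0,0,0), (0,1,1,0,0,0), (0,1,1,0,0,1), (0,1,1,1,0,0), (0,1,1,1,0,1), (0,1,1,1,1,0), (0,1,1,1,1,1), (0,1,2,1,0,1), (0,1,2,1,1,1), (0,1,2,2,1,1), (1,0,0,0,0,0), (1,1,0,0,0,0), (1,1,1,0,0,0), (1,1,1,0,0,1), (1,1,1,1,0,0), (1,1,1,1,0,1), (1,1,1,1,1,0), (1,1,1,1,1,1),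 (1,1,2,1,0,1), (1,1,2,1,1,1), (1,1,2,2,1,1), (1,2,2,1,0,1), (1,2,2,1,1,1), (1,2,2,2,1,1), (1,2,3,2,1,1), (1,2,3,2,1,2)]

set_option maxHeartbeats 1000000 in
lemma auxE6 : ∀ (x0 : Fin 2) (x1 : Fin 3) (x2 : Fin 4) (x3 : Fin 3) (x4 : Fin 2) (x5 : Fin 3),
    x0.val^2 + x1.val^2 + x2.val^2 + x3.val^2 + x4.val^2 + x5.val^2 =
      1 + x0.val*x1.val + x1.val*x2.val + x2.val*x3.val + x3.val*x4.val + x2.val*x5.val →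
    (x0.val, x1.val, x2.val, x3.val, x4.val, x5.val) ∈ rootTuplesE6 := by
  decide

lemma vec6_eq_iff (f g : Fin 6 → ℤ) :
    f = g ↔ f 0 = g 0 ∧ f 1 = g 1 ∧ f 2 = g 2 ∧ f 3 = g 3 ∧ f 4 = g 4 ∧ f 5 = g 5 := by
  constructor
  · rintro rfl; exact ⟨rfl, rfl, rfl, rfl, rfl, rfl⟩
  · rintro ⟨e0, e1, e2, e3, e4, e5⟩; funext i; fin_cases i <;> assumption

set_option maxHeartbeats 4000000 in
theorem stmt16 (α : Fin 6 → ℤ) (hpos : IsPositiveRoot α)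
    (hns : ∀ i, α ≠ simpleRoot i)
    (h01 : α ≠ simpleRoot 0 + simpleRoot 1)
    (h34 : α ≠ simpleRoot 3 + simpleRoot 4)
    (h25 : α ≠ simpleRoot 2 + simpleRoot 5) :
    ((α 1 = α 2 ∧ α 3 ≤ α 2) ∨ (α 1 ≤ α 2 ∧ α 2 = α 3) ∨ (α 1 = α 3 ∧ α 1 < α 2)) ∧
    ((α 1 = α 2 ∧ α 3 ≤ α 2) →
      α 0 ≤ α 1 ∧ α 4 ≤ α 3 ∧ α 5 ≤ α 1 ∧
      α = α 3 • uE6 + (α 1 - α 3) • vE6 + (α 1 - α 0) • (-simpleRoot 0)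
          + (α 3 - α 4) • (-simpleRoot 4) + (α 1 - α 5) • (-simpleRoot 5)) ∧
    ((α 1 ≤ α 2 ∧ α 2 = α 3) →
      α 0 ≤ α 1 ∧ α 4 ≤ α 3 ∧ α 5 ≤ α 3 ∧
      α = α 1 • uE6 + (α 3 - α 1) • wE6 + (α 1 - α 0) • (-simpleRoot 0)
          + (α 3 - α 4) • (-simpleRoot 4) + (α 3 - α 5) • (-simpleRoot 5)) ∧
    ((α 1 = α 3 ∧ α 1 < α 2) →
      ⌊(α 2 : ℚ) / 2⌋ = α 2 - α 1 ∧ ⌊(α 2 : ℚ) / 2⌋ ≤ α 1 ∧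
      ∃ b₀ b₄ b₅ : ℤ, 0 ≤ b₀ ∧ 0 ≤ b₄ ∧ 0 ≤ b₅ ∧
        α = ⌊(α 2 : ℚ) / 2⌋ • vE6 + ⌊(α 2 : ℚ) / 2⌋ • wE6
            + (α 1 - ⌊(α 2 : ℚ) / 2⌋) • uE6
            + b₀ • (-simpleRoot 0) + b₄ • (-simpleRoot 4) + b₅ • (-simpleRoot 5)) := by
  obtain ⟨hroot, hnn⟩ := hpos
  have h0 := hnn 0; have h1 := hnn 1; have h2 := hnn 2
  have h3 := hnn 3; have h4 := hnn 4; have h5 := hnn 5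
  -- quadratic equation
  unfold IsRoot bformE6 at hroot
  simp (config := { decide := true }) only [cartanE6, Fin.sum_univ_six] at hroot
  norm_num at hroot
  have hq : 2*(α 0^2 + α 1^2 + α 2^2 + α 3^2 + α 4^2 + α 5^2
      - α 0 * α 1 - α 1 * α 2 - α 2 * α 3 - α 3 * α 4 - α 2 * α 5) = 2 := by
    linear_combination hroot
  clear hroot
  -- linearize exclusions
  have hns0 := hns 0; have hns1 := hns 1; have hns2 := hns 2
  have hns3 := hns 3; have hns4 := hns 4; have hns5 := hns 5
  clear hns hnn
  simp (config := { decide := true }) only [ne_eq, vec6_eq_iff, simpleRoot, Pi.add_apply,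
    if_true, if_false] at hns0 hns1 hns2 hns3 hns4 hns5 h01 h34 h25
  -- floor rewrite
  have hm : ⌊(α 2 : ℚ) / 2⌋ = α 2 / 2 := by
    rw [show (2 : ℚ) = ((2 : ℕ) : ℚ) by norm_num, Rat.floor_intCast_div_natCast]
    norm_num
  rw [hm]
  -- linearize the goal
  simp (config := { decide := true }) only [vec6_eq_iff, uE6, vE6, wE6, simpleRoot,
    Pi.add_apply, Pi.smul_apply, Pi.neg_apply, smul_eq_mul, if_true, if_false,
    mul_one, mul_zero, mul_neg, add_zero, zero_add, neg_zero, neg_neg, and_true, true_and]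
  -- generalize coordinates
  obtain ⟨a0, ha0⟩ : ∃ x, α 0 = x := ⟨_, rfl⟩
  obtain ⟨a1, ha1⟩ : ∃ x, α 1 = x := ⟨_, rfl⟩
  obtain ⟨a2, ha2⟩ : ∃ x, α 2 = x := ⟨_, rfl⟩
  obtain ⟨a3, ha3⟩ : ∃ x, α 3 = x := ⟨_, rfl⟩
  obtain ⟨a4, ha4⟩ : ∃ x, α 4 = x := ⟨_, rfl⟩
  obtain ⟨a5, ha5⟩ : ∃ x, α 5 = x := ⟨_, rfl⟩
  simp only [ha0, ha1, ha2, ha3, ha4, ha5] at *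
  -- bounds
  have b0 : a0 ≤ 1 := by
    nlinarith [sq_nonneg (5*a0-4*a1), sq_nonneg (6*a1-5*a2), sq_nonneg (7*a2-6*a3-6*a5),
      sq_nonneg (8*a3-7*a4-6*a5), sq_nonneg (3*a4-2*a5), h0]
  have b1 : a1 ≤ 2 := by
    nlinarith [sq_nonneg (2*a0-a1), sq_nonneg (6*a1-5*a2), sq_nonneg (7*a2-6*a3-6*a5),
      sq_nonneg (8*a3-7*a4-6*a5), sq_nonneg (3*a4-2*a5), h1]
  have b2 : a2 ≤ 3 := by
    nlinarith [sq_nonneg (2*a0-a1), sq_nonneg (3*a1-2*a2), sq_nonneg (7*a2-6*a3-6*a5),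
      sq_nonneg (8*a3-7*a4-6*a5), sq_nonneg (3*a4-2*a5), h2]
  have b3 : a3 ≤ 2 := by
    nlinarith [sq_nonneg (2*a0-a1), sq_nonneg (3*a1-2*a2), sq_nonneg (4*a2-3*a3-3*a5),
      sq_nonneg (19*a3-20*a4-15*a5), sq_nonneg (6*a4-5*a5), h3]
  have b4 : a4 ≤ 1 := by
    nlinarith [sq_nonneg (2*a0-a1), sq_nonneg (3*a1-2*a2), sq_nonneg (4*a2-3*a3-3*a5),
      sq_nonneg (5*a3-4*a4-3*a5), sq_nonneg (3*a4-4*a5), h4]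
  have b5 : a5 ≤ 2 := by
    nlinarith [sq_nonneg (2*a0-a1), sq_nonneg (3*a1-2*a2), sq_nonneg (4*a2-3*a3-3*a5),
      sq_nonneg (5*a3-4*a4-3*a5), sq_nonneg (2*a4-a5), h5]
  obtain ⟨n0, hn0⟩ : ∃ n : ℕ, a0 = n := ⟨a0.toNat, (Int.toNat_of_nonneg h0).symm⟩
  obtain ⟨n1, hn1⟩ : ∃ n : ℕ, a1 = n := ⟨a1.toNat, (Int.toNat_of_nonneg h1).symm⟩
  obtain ⟨n2, hn2⟩ : ∃ n : ℕ, a2 = n := ⟨a2.toNat, (Int.toNat_of_nonneg h2).symm⟩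
  obtain ⟨n3, hn3⟩ : ∃ n : ℕ, a3 = n := ⟨a3.toNat, (Int.toNat_of_nonneg h3).symm⟩
  obtain ⟨n4, hn4⟩ : ∃ n : ℕ, a4 = n := ⟨a4.toNat, (Int.toNat_of_nonneg h4).symm⟩
  obtain ⟨n5, hn5⟩ : ∃ n : ℕ, a5 = n := ⟨a5.toNat, (Int.toNat_of_nonneg h5).symm⟩
  have hC : n0^2 + n1^2 + n2^2 + n3^2 + n4^2 + n5^2 =
      1 + n0*n1 + n1*n2 + n2*n3 + n3*n4 + n2*n5 := by
    zify
    rw [← hn0, ← hn1, ← hn2, ← hn3, ← hn4, ← hn5]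
    linarith [hq]
  have key := auxE6 ⟨n0, by omega⟩ ⟨n1, by omega⟩ ⟨n2, by omega⟩ ⟨n3, by omega⟩
    ⟨n4, by omega⟩ ⟨n5, by omega⟩ hC
  simp only [rootTuplesE6, List.mem_cons, List.not_mem_nil, or_false, Prod.mk.injEq] at key
  norm_num at h01 h34 h25
  clear hq hC hm b0 b1 b2 b3 b4 b5 h0 h1 h2 h3 h4 h5
  rcases key with (⟨rfl,rfl,rfl,rfl,rfl,rfl⟩|⟨rfl,rfl,rfl,rfl,rfl,rfl⟩|⟨rfl,rfl,rfl,rfl,rfl,rfl⟩|⟨rfl,rfl,rfl,rfl,rfl,rfl⟩|⟨rfl,rfl,rfl,rfl,rfl,rfl⟩|⟨rfl,rfl,rfl,rfl,rfl,rfl⟩|⟨rfl,rfl,rfl,rfl,rfl,rfl⟩|⟨rfl,rfl,rfl,rfl,rfl,rfl⟩|⟨rfl,rfl,rfl,rfl,rfl,rfl⟩|⟨rfl,rfl,rfl,rfl,rfl,rfl⟩|⟨rfl,rfl,rfl,rfl,rfl,rfl⟩|⟨rfl,rfl,rfl,rfl,rfl,rfl⟩|⟨rfl,rfl,rfl,r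fl,rfl,rfl⟩|⟨rfl,rfl,rfl,rfl,rfl,rfl⟩|⟨rfl,rfl,rfl,rfl,rfl,rfl⟩|⟨rfl,rfl,rfl,rfl,rfl,rfl⟩|⟨rfl,rfl,rfl,rfl,rfl,rfl⟩|⟨rfl,rfl,rfl,rfl,rfl,rfl⟩|⟨rfl,rfl,rfl,rfl,rfl,rfl⟩|⟨rfl,rfl,rfl,rfl,rfl,rfl⟩|⟨rfl,rfl,rfl,rfl,rfl,rfl⟩|⟨rfl,rfl,rfl,rfl,rfl,rfl⟩|⟨rfl,rfl,rfl,rfl,rfl,rfl⟩|⟨rfl,rfl,rfl,rfl,rfl,rfl⟩|⟨rfl,rfl,rfl,rfl,rfl,rfl⟩|⟨rfl,rfl,rfl,rfl,rfl,rfl⟩|⟨rfl,rfl,rfl,rfl,rfl,rfl⟩|⟨rfl,rfl,rfl,rfl,rfl,rfl⟩|⟨rfl,rfl,rfl,rfl,rfl,rfl⟩|⟨rfl,rfl,rfl,rfl,rfl,rfl⟩|⟨rfl,rfl,rfl,rfl,rfl,rfl⟩|⟨rfl,rfl,rfl,rfl,rfl,rfl⟩|⟨rfl,rfl,rfl,r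fl,rfl,rfl⟩|⟨rfl,rfl,rfl,rfl,rfl,rfl⟩|⟨rfl,rfl,rfl,rfl,rfl,rfl⟩|⟨rfl,rfl,rfl,rfl,rfl,rfl⟩)
  · exact (hns5 ⟨hn0, hn1, hn2, hn3, hn4, hn5⟩).elim
  · exact (hns4 ⟨hn0, hn1, hn2, hn3, hn4, hn5⟩).elim
  · exact (hns3 ⟨hn0, hn1, hn2, hn3, hn4, hn5⟩).elim
  · exact (h34 hn0 hn1 hn2 hn3 hn4 hn5).elim
  · exact (hns2 ⟨hn0, hn1, hn2, hn3, hn4, hn5⟩).elim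
  · exact (h25 hn0 hn1 hn2 hn3 hn4 hn5).elim
  · clear hns0 hns1 hns2 hns3 hns4 hns5 h01 h34 h25
    exact ⟨by omega, fun hc => by omega, fun hc => by omega,
      fun hc => ⟨by omega, by omega, a1 - a0, a1 - a4, a1 + a2 / 2 - a5, by omega⟩⟩
  · clear hns0 hns1 hns2 hns3 hns4 hns5 h01 h34 h25
    exact ⟨by omega, fun hc => by omega, fun hc => by omega,
      fun hc => ⟨by omega, by omega, a1 - a0, a1 - a4, a1 + a2 / 2 - a5, by omega⟩⟩
  · clear hns0 hns1 hns2 hns3 hns4 hns5 h01 h34 h25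
    exact ⟨by omega, fun hc => by omega, fun hc => by omega,
      fun hc => ⟨by omega, by omega, a1 - a0, a1 - a4, a1 + a2 / 2 - a5, by omega⟩⟩
  · clear hns0 hns1 hns2 hns3 hns4 hns5 h01 h34 h25
    exact ⟨by omega, fun hc => by omega, fun hc => by omega,
      fun hc => ⟨by omega, by omega, a1 - a0, a1 - a4, a1 + a2 / 2 - a5, by omega⟩⟩
  · exact (hns1 ⟨hn0, hn1, hn2, hn3, hn4, hn5⟩).elim
  · clear hns0 hns1 hns2 hns3 hns4 hns5 h01 h34 h25
    exact ⟨by omega, fun hc => by omega, fun hc => by omega,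
      fun hc => ⟨by omega, by omega, a1 - a0, a1 - a4, a1 + a2 / 2 - a5, by omega⟩⟩
  · clear hns0 hns1 hns2 hns3 hns4 hns5 h01 h34 h25
    exact ⟨by omega, fun hc => by omega, fun hc => by omega,
      fun hc => ⟨by omega, by omega, a1 - a0, a1 - a4, a1 + a2 / 2 - a5, by omega⟩⟩
  · clear hns0 hns1 hns2 hns3 hns4 hns5 h01 h34 h25
    exact ⟨by omega, fun hc => by omega, fun hc => by omega,
      fun hc => ⟨by omega, by omega, a1 - a0, a1 - a4, a1 + a2 / 2 - a5, by omega⟩⟩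
  · clear hns0 hns1 hns2 hns3 hns4 hns5 h01 h34 h25
    exact ⟨by omega, fun hc => by omega, fun hc => by omega,
      fun hc => ⟨by omega, by omega, a1 - a0, a1 - a4, a1 + a2 / 2 - a5, by omega⟩⟩
  · clear hns0 hns1 hns2 hns3 hns4 hns5 h01 h34 h25
    exact ⟨by omega, fun hc => by omega, fun hc => by omega,
      fun hc => ⟨by omega, by omega, a1 - a0, a1 - a4, a1 + a2 / 2 - a5, by omega⟩⟩
  · clear hns0 hns1 hns2 hns3 hns4 hns5 h01 h34 h25
    exact ⟨by omega, fun hc => by omega, fun hc => by omega,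
      fun hc => ⟨by omega, by omega, a1 - a0, a1 - a4, a1 + a2 / 2 - a5, by omega⟩⟩
  · clear hns0 hns1 hns2 hns3 hns4 hns5 h01 h34 h25
    exact ⟨by omega, fun hc => by omega, fun hc => by omega,
      fun hc => ⟨by omega, by omega, a1 - a0, a1 - a4, a1 + a2 / 2 - a5, by omega⟩⟩
  · clear hns0 hns1 hns2 hns3 hns4 hns5 h01 h34 h25
    exact ⟨by omega, fun hc => by omega, fun hc => by omega,
      fun hc => ⟨by omega, by omega, a1 - a0, a1 - a4, a1 + a2 / 2 - a5, by omega⟩⟩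
  · clear hns0 hns1 hns2 hns3 hns4 hns5 h01 h34 h25
    exact ⟨by omega, fun hc => by omega, fun hc => by omega,
      fun hc => ⟨by omega, by omega, a1 - a0, a1 - a4, a1 + a2 / 2 - a5, by omega⟩⟩
  · exact (hns0 ⟨hn0, hn1, hn2, hn3, hn4, hn5⟩).elim
  · exact (h01 hn0 hn1 hn2 hn3 hn4 hn5).elim
  · clear hns0 hns1 hns2 hns3 hns4 hns5 h01 h34 h25
    exact ⟨by omega, fun hc => by omega, fun hc => by omega,
      fun hc => ⟨by omega, by omega, a1 - a0, a1 - a4, a1 + a2 / 2 - a5, by omega⟩⟩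
  · clear hns0 hns1 hns2 hns3 hns4 hns5 h01 h34 h25
    exact ⟨by omega, fun hc => by omega, fun hc => by omega,
      fun hc => ⟨by omega, by omega, a1 - a0, a1 - a4, a1 + a2 / 2 - a5, by omega⟩⟩
  · clear hns0 hns1 hns2 hns3 hns4 hns5 h01 h34 h25
    exact ⟨by omega, fun hc => by omega, fun hc => by omega,
      fun hc => ⟨by omega, by omega, a1 - a0, a1 - a4, a1 + a2 / 2 - a5, by omega⟩⟩
  · clear hns0 hns1 hns2 hns3 hns4 hns5 h01 h34 h25
    exact ⟨by omega, fun hc => by omega, fun hc => by omega,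
      fun hc => ⟨by omega, by omega, a1 - a0, a1 - a4, a1 + a2 / 2 - a5, by omega⟩⟩
  · clear hns0 hns1 hns2 hns3 hns4 hns5 h01 h34 h25
    exact ⟨by omega, fun hc => by omega, fun hc => by omega,
      fun hc => ⟨by omega, by omega, a1 - a0, a1 - a4, a1 + a2 / 2 - a5, by omega⟩⟩
  · clear hns0 hns1 hns2 hns3 hns4 hns5 h01 h34 h25
    exact ⟨by omega, fun hc => by omega, fun hc => by omega,
      fun hc => ⟨by omega, by omega, a1 - a0, a1 - a4, a1 + a2 / 2 - a5, by omega⟩⟩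
  · clear hns0 hns1 hns2 hns3 hns4 hns5 h01 h34 h25
    exact ⟨by omega, fun hc => by omega, fun hc => by omega,
      fun hc => ⟨by omega, by omega, a1 - a0, a1 - a4, a1 + a2 / 2 - a5, by omega⟩⟩
  · clear hns0 hns1 hns2 hns3 hns4 hns5 h01 h34 h25
    exact ⟨by omega, fun hc => by omega, fun hc => by omega,
      fun hc => ⟨by omega, by omega, a1 - a0, a1 - a4, a1 + a2 / 2 - a5, by omega⟩⟩
  · clear hns0 hns1 hns2 hns3 hns4 hns5 h01 h34 h25
    exact ⟨by omega, fun hc => by omega, fun hc => by omega,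
      fun hc => ⟨by omega, by omega, a1 - a0, a1 - a4, a1 + a2 / 2 - a5, by omega⟩⟩
  · clear hns0 hns1 hns2 hns3 hns4 hns5 h01 h34 h25
    exact ⟨by omega, fun hc => by omega, fun hc => by omega,
      fun hc => ⟨by omega, by omega, a1 - a0, a1 - a4, a1 + a2 / 2 - a5, by omega⟩⟩
  · clear hns0 hns1 hns2 hns3 hns4 hns5 h01 h34 h25
    exact ⟨by omega, fun hc => by omega, fun hc => by omega,
      fun hc => ⟨by omega, by omega, a1 - a0, a1 - a4, a1 + a2 / 2 - a5, by omega⟩⟩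
  · clear hns0 hns1 hns2 hns3 hns4 hns5 h01 h34 h25
    exact ⟨by omega, fun hc => by omega, fun hc => by omega,
      fun hc => ⟨by omega, by omega, a1 - a0, a1 - a4, a1 + a2 / 2 - a5, by omega⟩⟩
  · clear hns0 hns1 hns2 hns3 hns4 hns5 h01 h34 h25
    exact ⟨by omega, fun hc => by omega, fun hc => by omega,
      fun hc => ⟨by omega, by omega, a1 - a0, a1 - a4, a1 + a2 / 2 - a5, by omega⟩⟩
  · clear hns0 hns1 hns2 hns3 hns4 hns5 h01 h34 h25
    exact ⟨by omega, fun hc => by omega, fun hc => by omega,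
      fun hc => ⟨by omega, by omega, a1 - a0, a1 - a4, a1 + a2 / 2 - a5, by omega⟩⟩
end
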